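/- If T ∈ SU(n,n) satisfies T ∗ U = U for all U ∈ U_n (Möbius action), then T = u·I_{2n} for some u ∈ ℂ with u^{2n} = 1. Hence the Möbius action of SU(n,n) on U_n is almost effective. -/

import Mathlib

open Matrix Complex

section aux
variable {n : ℕ}

/-- A matrix commuting with all unitaries is scalar. -/
lemma comm_unitary_scalar [NeZero n] (A : Matrix (Fin n) (Fin n) ℂ)
    (hc : ∀ U : Matrix (Fin n) (Fin n) ℂ, Uᴴ * U = 1 → A * U = U * A) :
    ∃ u : ℂ, A = u • (1 : Matrix (Fin n) (Fin n) ℂ) := by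
  have happ : ∀ {M N : Matrix (Fin n) (Fin n) ℂ}, M = N → ∀ i j, M i j = N i j :=
    fun h i j => by rw [h]
  -- off-diagonal entries vanish
  have hoff : ∀ i j : Fin n, i ≠ j → A i j = 0 := by
    intro i j hij
    set d : Fin n → ℂ := fun m => if m = j then (-1 : ℂ) else 1 with hd
    have hunit : (diagonal d)ᴴ * diagonal d = 1 := by
      rw [diagonal_conjTranspose, diagonal_mul_diagonal]
      ext a b
      by_cases hab : a = b
      · subst hab; simp [hd]; split <;> norm_num
      · simp [diagonal_apply_ne _ hab, one_apply_ne hab]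
    have h1 := happ (hc (diagonal d) hunit) i j
    rw [mul_diagonal, diagonal_mul] at h1
    simp only [hd, if_pos rfl, if_neg hij] at h1
    linear_combination (-1/2 : ℂ) * h1
  -- diagonal entries coincide
  have hdiag : ∀ k l : Fin n, A k k = A l l := by
    intro k l
    set S : Matrix (Fin n) (Fin n) ℂ :=
      Matrix.of fun i j => if i = Equiv.swap k l j then (1 : ℂ) else 0 with hS
    have hcond : ∀ i m : Fin n, (i = Equiv.swap k l m) ↔ (m = Equiv.swap k l i) := by
      intro i m
      constructor <;> intro h <;> simp [h, Equiv.swap_apply_self]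
    have hunit : Sᴴ * S = 1 := by
      ext a b
      simp only [mul_apply, conjTranspose_apply, hS, Matrix.of_apply, one_apply,
        apply_ite (star : ℂ → ℂ), star_one, star_zero, ite_mul, one_mul, zero_mul]
      rw [Finset.sum_ite_eq' Finset.univ (Equiv.swap k l a)
        (fun m => if m = Equiv.swap k l b then (1:ℂ) else 0)]
      simp [Equiv.injective _ |>.eq_iff, eq_comm]
    have h1 := happ (hc S hunit) k l
    simp only [mul_apply, hS, Matrix.of_apply, mul_ite, mul_one, mul_zero, ite_mul,
      one_mul, zero_mul] at h1
    rw [Finset.sum_ite_eq' Finset.univ (Equiv.swap k l l) (fun m => A k m)] at h1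
    simp only [hcond] at h1
    rw [Finset.sum_ite_eq' Finset.univ (Equiv.swap k l k) (fun m => A m l)] at h1
    simpa [Equiv.swap_apply_left, Equiv.swap_apply_right] using h1
  obtain ⟨k₀⟩ := (inferInstance : Nonempty (Fin n))
  refine ⟨A k₀ k₀, ?_⟩
  ext i j
  by_cases hij : i = j
  · subst hij; simp [one_apply, hdiag i k₀]
  · simp [one_apply_ne hij, hoff i j hij]

end aux

/-- `δ = diag(I_n, -I_n)` over `ℂ`. -/
def deltaMatC (n : ℕ) : Matrix (Fin n ⊕ Fin n) (Fin n ⊕ Fin n) ℂ :=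
  Matrix.fromBlocks 1 0 0 (-1)

/-- The Möbius action `[[A,B],[C,D]] ∗ U = (AU + B)(CU + D)⁻¹` on `U_n`. -/
noncomputable def mobiusC {n : ℕ} (T : Matrix (Fin n ⊕ Fin n) (Fin n ⊕ Fin n) ℂ)
    (U : Matrix (Fin n) (Fin n) ℂ) : Matrix (Fin n) (Fin n) ℂ :=
  (T.toBlocks₁₁ * U + T.toBlocks₁₂) * (T.toBlocks₂₁ * U + T.toBlocks₂₂)⁻¹

/-- If `T ∈ SU(n,n)` satisfies `T ∗ U = U` for all `U ∈ U_n`, then `T = u • I_{2n}`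
for some `u ∈ ℂ` with `u^{2n} = 1`; hence the Möbius action of `SU(n,n)` on `U_n` is
almost effective. -/
theorem mobius_SU_almost_effective {n : ℕ}
    (T : Matrix (Fin n ⊕ Fin n) (Fin n ⊕ Fin n) ℂ)
    (hT : Tᴴ * deltaMatC n * T = deltaMatC n) (hdet : T.det = 1)
    (h : ∀ U : Matrix (Fin n) (Fin n) ℂ, Uᴴ * U = 1 → mobiusC T U = U) :
    ∃ u : ℂ, u ^ (2 * n) = 1 ∧ T = u • (1 : Matrix (Fin n ⊕ Fin n) (Fin n ⊕ Fin n) ℂ) := by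
  rcases Nat.eq_zero_or_pos n with hn | hn
  · subst hn
    exact ⟨1, by norm_num, by ext i j; exact (IsEmpty.false i).elim⟩
  haveI : NeZero n := ⟨hn.ne'⟩
  set A := T.toBlocks₁₁ with hA
  set B := T.toBlocks₁₂ with hB'
  set C := T.toBlocks₂₁ with hC'
  set D := T.toBlocks₂₂ with hD'
  have happ : ∀ {M N : Matrix (Fin n) (Fin n) ℂ}, M = N → ∀ i j, M i j = N i j :=
    fun h i j => by rw [h]
  -- Step 1: the basic identity
  have key : ∀ U : Matrix (Fin n) (Fin n) ℂ, Uᴴ * U = 1 →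
      A * U + B = U * C * U + U * D := by
    intro U hU
    have h0 := h U hU
    unfold mobiusC at h0
    rw [← hA, ← hB', ← hC', ← hD'] at h0
    by_cases hd : IsUnit (C * U + D).det
    · have h2 := congrArg (· * (C * U + D)) h0
      rw [mul_assoc, nonsing_inv_mul _ hd, mul_one] at h2
      rw [h2, mul_add, ← mul_assoc]
    · rw [Matrix.nonsing_inv_apply_not_isUnit _ hd, mul_zero] at h0
      rw [← h0] at hU
      simp only [conjTranspose_zero, mul_zero] at hU
      exact absurd hU.symm one_ne_zero
  have h1unit : (1 : Matrix (Fin n) (Fin n) ℂ)ᴴ * 1 = 1 := by simp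
  -- Step 2: the three scaled identities give A*U = U*D and B = 0, C = 0
  have hAU : ∀ U : Matrix (Fin n) (Fin n) ℂ, Uᴴ * U = 1 → A * U = U * D := by
    intro U hU
    have e1 := key U hU
    have e2 := key (-U) (by simp [hU])
    simp only [mul_neg, neg_mul, neg_neg] at e2
    ext i j
    have f1 := happ e1 i j
    have f2 := happ e2 i j
    simp only [Matrix.add_apply, Matrix.neg_apply] at f1 f2
    linear_combination (1/2 : ℂ) * f1 - (1/2 : ℂ) * f2
  have hAD : A = D := by simpa using hAU 1 h1unit
  have hB : B = 0 := by
    have e1 := key 1 h1unit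
    have e2 := key (-1) (by simp)
    have e3 := key (I • 1) (by
      simp [conjTranspose_smul, smul_mul_assoc, mul_smul_comm, smul_smul, Complex.conj_I,
        Complex.I_mul_I])
    simp only [mul_neg, neg_mul, neg_neg, mul_one, one_mul] at e1 e2 e3
    simp only [smul_mul_assoc, mul_smul_comm, smul_smul, Complex.I_mul_I, neg_smul,
      one_smul, mul_one, one_mul] at e3
    ext i j
    have f1 := happ e1 i j
    have f2 := happ e2 i j
    have f3 := happ e3 i j
    simp only [Matrix.add_apply, Matrix.neg_apply, Matrix.smul_apply, Matrix.zero_apply, smul_eq_mul] at f1 f2 f3 ⊢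
    linear_combination (1/4 - I/4 : ℂ) * f1 + (1/4 + I/4 : ℂ) * f2 + (1/2 : ℂ) * f3
  have hC : C = 0 := by
    have e1 := key 1 h1unit
    simp only [mul_one, one_mul, hB, hAD, add_zero] at e1
    exact (add_eq_right.mp e1.symm)
  -- Step 3: A commutes with all unitaries, hence is scalar
  obtain ⟨u, hu⟩ := comm_unitary_scalar A (fun U hU => by rw [hAU U hU, hAD])
  have hTu : T = u • (1 : Matrix (Fin n ⊕ Fin n) (Fin n ⊕ Fin n) ℂ) := by
    have hblocks : T = fromBlocks A B C D := (fromBlocks_toBlocks T).symm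
    rw [hblocks, hB, hC, hu, hAD.symm.trans hu]
    ext (i | i) (j | j) <;>
      simp [fromBlocks, one_apply, Matrix.smul_apply, smul_eq_mul, apply_ite (u * ·)]
  refine ⟨u, ?_, hTu⟩
  rw [hTu] at hdet
  rw [Matrix.det_smul, det_one, mul_one] at hdet
  rw [← hdet]
  congr 1
  simp [two_mul]
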